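/- For any finite-dimensional unital composition algebra over ℝ or ℂ, the multiplicative non-degenerate quadratic form η is uniquely determined by the algebra structure: if η₁ and η₂ are two non-degenerate quadratic forms on the same unital algebra, each satisfying ηᵢ(x·y) = ηᵢ(x)ηᵢ(y) for all x, y, then η₁ = η₂. -/

import Mathlib

/-- For a finite-dimensional unital (composition) algebra over ℝ or ℂ, the
multiplicative non-degenerate quadratic form is uniquely determined by the algebra
structure: if `η₁` and `η₂` are two non-degenerate quadratic forms on the same unital
algebra, each satisfying `ηᵢ (x * y) = ηᵢ x * ηᵢ y` for all `x y`, then `η₁ = η₂`. -/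
theorem composition_algebra_norm_unique
    (F : Type*) [Field F]
    (hF : Nonempty (F ≃+* ℝ) ∨ Nonempty (F ≃+* ℂ))
    (V : Type*) [AddCommGroup V] [Module F V] [FiniteDimensional F V]
    (mul : V →ₗ[F] V →ₗ[F] V) (one : V)
    (hone : ∀ x : V, mul one x = x ∧ mul x one = x)
    (η₁ η₂ : QuadraticForm F V)
    (hnd₁ : LinearMap.BilinForm.Nondegenerate (QuadraticMap.polarBilin η₁))
    (hnd₂ : LinearMap.BilinForm.Nondegenerate (QuadraticMap.polarBilin η₂))
    (hcomp₁ : ∀ x y : V, η₁ (mul x y) = η₁ x * η₁ y)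
    (hcomp₂ : ∀ x y : V, η₂ (mul x y) = η₂ x * η₂ y) :
    η₁ = η₂ := by
  classical
  by_cases hV : ∀ v : V, v = 0
  · ext x; rw [hV x]; simp
  push_neg at hV
  obtain ⟨v, hv⟩ := hV
  have hone0 : one ≠ 0 := by
    intro h
    apply hv
    have h1 := (hone v).1
    rw [h] at h1
    simpa using h1.symm
  -- the key facts, proved uniformly for any multiplicative nondegenerate form
  have main : ∀ (η : QuadraticForm F V),
      LinearMap.BilinForm.Nondegenerate (QuadraticMap.polarBilin η) →
      (∀ x y : V, η (mul x y) = η x * η y) →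
      η one = 1 ∧ ∀ x : V, mul x x = QuadraticMap.polar η x one • x - η x • one := by
    intro η hnd hcomp
    have hone1 : η one = 1 := by
      have h : η one = η one * η one := by
        have := hcomp one one
        rwa [(hone one).1] at this
      rcases mul_eq_zero.mp (by ring_nf; linear_combination -h : η one * (η one - 1) = 0) with h0 | h0
      · -- η one = 0 forces η = 0, contradicting nondegeneracy
        exfalso
        have hzero : ∀ x : V, η x = 0 := by
          intro x
          have := hcomp one x
          rw [(hone x).1, h0, zero_mul] at this
          exact this
        apply hv
        apply hnd.1 v
        intro y
        simp [QuadraticMap.polarBilin_apply_apply, QuadraticMap.polar, hzero]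
      · exact sub_eq_zero.mp h0
    refine ⟨hone1, ?_⟩
    -- linearized composition identities
    have L1 : ∀ x y w : V, QuadraticMap.polar η (mul x y) (mul x w)
        = η x * QuadraticMap.polar η y w := by
      intro x y w
      have hadd : mul x y + mul x w = mul x (y + w) := ((mul x).map_add y w).symm
      simp only [QuadraticMap.polar, hadd, hcomp]
      ring
    have L3 : ∀ x₁ x₂ y w : V, QuadraticMap.polar η (mul x₁ y) (mul x₂ w)
          + QuadraticMap.polar η (mul x₂ y) (mul x₁ w)
        = QuadraticMap.polar η x₁ x₂ * QuadraticMap.polar η y w := by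
      intro x₁ x₂ y w
      have h := L1 (x₁ + x₂) y w
      have e1 : mul (x₁ + x₂) y = mul x₁ y + mul x₂ y := by
        rw [map_add]; rfl
      have e2 : mul (x₁ + x₂) w = mul x₁ w + mul x₂ w := by
        rw [map_add]; rfl
      rw [e1, e2, QuadraticMap.polar_add_left, QuadraticMap.polar_add_right,
        QuadraticMap.polar_add_right] at h
      have hη : η (x₁ + x₂) = η x₁ + η x₂ + QuadraticMap.polar η x₁ x₂ := by
        simp only [QuadraticMap.polar]; ring
      rw [hη] at h
      have h1 := L1 x₁ y w
      have h2 := L1 x₂ y w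
      linear_combination h - h1 - h2
    intro x
    -- show the polar form of the difference vanishes against every z
    apply sub_eq_zero.mp
    apply hnd.1
    intro z
    have h3 := L3 x one x z
    rw [(hone z).1, (hone x).1] at h3
    have h4 : QuadraticMap.polar η x (mul x z) = η x * QuadraticMap.polar η one z := by
      have := L1 x one z
      rwa [(hone x).2] at this
    simp only [map_sub, map_smul, LinearMap.sub_apply, LinearMap.smul_apply,
      QuadraticMap.polarBilin_apply_apply, smul_eq_mul]
    linear_combination h3 - h4
  obtain ⟨h1one, hkey1⟩ := main η₁ hnd₁ hcomp₁
  obtain ⟨h2one, hkey2⟩ := main η₂ hnd₂ hcomp₂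
  ext x
  by_cases hx : ∃ c : F, x = c • one
  · obtain ⟨c, rfl⟩ := hx
    rw [QuadraticMap.map_smul, QuadraticMap.map_smul, h1one, h2one]
  · -- x not a multiple of one
    have heq : QuadraticMap.polar η₁ x one • x - η₁ x • one
        = QuadraticMap.polar η₂ x one • x - η₂ x • one := by
      rw [← hkey1 x, ← hkey2 x]
    have heq2 : (QuadraticMap.polar η₁ x one - QuadraticMap.polar η₂ x one) • x
        = (η₁ x - η₂ x) • one := by
      rw [sub_smul, sub_smul]
      linear_combination (norm := module) heq
    by_cases hp : QuadraticMap.polar η₁ x one - QuadraticMap.polar η₂ x one = 0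
    · rw [hp, zero_smul] at heq2
      have : η₁ x - η₂ x = 0 := by
        by_contra h0
        exact hone0 (by simpa [h0] using smul_eq_zero.mp heq2.symm)
      exact sub_eq_zero.mp this
    · exfalso
      apply hx
      refine ⟨(QuadraticMap.polar η₁ x one - QuadraticMap.polar η₂ x one)⁻¹ * (η₁ x - η₂ x), ?_⟩
      rw [mul_smul, ← heq2, smul_smul, inv_mul_cancel₀ hp, one_smul]
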